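/- Let H ∈ Sym_d, g ∈ ℝ^d, Δ > 0, and v ∈ ℝ^d with ‖v‖ ≤ Δ/2. Let m(w) = ⟨g, w⟩ + (1/2)⟨w, Hw⟩ and r = -(Hv + g) = -∇m(v). Define u by: if ⟨r, Hr⟩ > 0 and ‖v + (‖r‖²/⟨r, Hr⟩)·r‖ < Δ, set u = v + (‖r‖²/⟨r, Hr⟩)·r (and then m(v) - m(u) ≥ ‖r‖²/(2L_G)); otherwise set u = v + s'·r with s' ≥ 0 such that ‖u‖ = Δ (and then m(v) - m(u) ≥ (Δ/4)·‖r‖). Here L_G bounds the operator norm of H. -/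
import Mathlib


open RealInnerProductSpace

/-- Arithmetic core of the convexity argument: along a ray starting strictly inside
the ball, the boundary crossing time is at most any later time with norm ≥ Δ. -/
lemma boundary_step_aux (Δ nv nr p s t : ℝ) (hΔ : 0 < Δ) (hs : 0 ≤ s) (ht : 0 ≤ t)
    (e0 : nv ^ 2 ≤ (Δ / 2) ^ 2)
    (e1 : nv ^ 2 + 2 * s * p + s ^ 2 * nr ^ 2 = Δ ^ 2)
    (e2 : Δ ^ 2 ≤ nv ^ 2 + 2 * t * p + t ^ 2 * nr ^ 2) : s ≤ t := by
  by_contra h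
  push_neg at h
  have hst : 0 < s - t := sub_pos.mpr h
  have hprod : (s - t) * (2 * p + (s + t) * nr ^ 2) ≤ 0 := by nlinarith
  have h1 : 2 * p + (s + t) * nr ^ 2 ≤ 0 := by
    rcases mul_nonpos_iff.mp hprod with ⟨h2, h3⟩ | ⟨h2, h3⟩
    · exact h3
    · linarith
  have h2 : s * (2 * p + (s + t) * nr ^ 2) ≤ 0 :=
    mul_nonpos_of_nonneg_of_nonpos hs h1
  have h3 : 0 ≤ s * t * nr ^ 2 := by positivity
  nlinarith [mul_pos hΔ hΔ]

/-- Decrease guarantee for the boundary gradient step (Lemma `cauchy_step`):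
an exact line search on the quadratic model `m` along the negative model gradient `r`
from `v` (with `‖v‖ ≤ Δ/2`), truncated to the ball of radius `Δ`, decreases `m`
by `‖r‖²/(2L_G)` in the interior case and by `(Δ/4)‖r‖` when hitting the boundary. -/
theorem boundary_gradient_step_decrease
    {d : ℕ} (H : EuclideanSpace ℝ (Fin d) →L[ℝ] EuclideanSpace ℝ (Fin d))
    (hsymm : ∀ a b, ⟪H a, b⟫ = ⟪a, H b⟫)
    (L_G : ℝ) (hH : ‖H‖ ≤ L_G)
    (g v r : EuclideanSpace ℝ (Fin d)) (Δ : ℝ) (hΔ : 0 < Δ) (hv : ‖v‖ ≤ Δ / 2)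
    (m : EuclideanSpace ℝ (Fin d) → ℝ)
    (hm : ∀ w, m w = ⟪g, w⟫ + (1 / 2) * ⟪w, H w⟫)
    (hr : r = -(H v + g)) :
    (0 < ⟪r, H r⟫ → ‖v + (‖r‖ ^ 2 / ⟪r, H r⟫) • r‖ < Δ →
      ‖r‖ ^ 2 / (2 * L_G) ≤ m v - m (v + (‖r‖ ^ 2 / ⟪r, H r⟫) • r)) ∧
    (¬(0 < ⟪r, H r⟫ ∧ ‖v + (‖r‖ ^ 2 / ⟪r, H r⟫) • r‖ < Δ) →
      ∀ s' : ℝ, 0 ≤ s' → ‖v + s' • r‖ = Δ →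
        Δ / 4 * ‖r‖ ≤ m v - m (v + s' • r)) := by
  -- gradient identity
  have hgr : ⟪g, r⟫ + ⟪r, H v⟫ = -‖r‖ ^ 2 := by
    have h1 : ⟪r, H v⟫ = ⟪H v, r⟫ := real_inner_comm _ _
    have h2 : ⟪g, r⟫ + ⟪H v, r⟫ = ⟪H v + g, r⟫ := by
      rw [inner_add_left]; ring
    have h3 : (H v + g : EuclideanSpace ℝ (Fin d)) = -r := by
      rw [hr]; simp
    rw [h1, h2, h3, inner_neg_left, real_inner_self_eq_norm_sq]
  -- key decrease formula
  have key : ∀ s : ℝ, m v - m (v + s • r) = s * ‖r‖ ^ 2 - s ^ 2 / 2 * ⟪r, H r⟫ := by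
    intro s
    have hv2 : ⟪v, H r⟫ = ⟪r, H v⟫ := by
      rw [← hsymm v r, real_inner_comm]
    rw [hm, hm]
    simp only [map_add, map_smul, inner_add_left, inner_add_right,
      real_inner_smul_left, real_inner_smul_right, hv2]
    have : ⟪g, r⟫ = -‖r‖ ^ 2 - ⟪r, H v⟫ := by linarith
    rw [this]; ring
  -- inner bound
  have hCb : ⟪r, H r⟫ ≤ L_G * ‖r‖ ^ 2 := by
    calc ⟪r, H r⟫ ≤ ‖r‖ * ‖H r‖ := real_inner_le_norm r (H r)
      _ ≤ ‖r‖ * (‖H‖ * ‖r‖) := by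
          apply mul_le_mul_of_nonneg_left (H.le_opNorm r) (norm_nonneg r)
      _ ≤ L_G * ‖r‖ ^ 2 := by nlinarith [norm_nonneg r, norm_nonneg (H r), (norm_nonneg H).trans hH]
  constructor
  · intro hcpos _
    rw [key]
    set c : ℝ := ⟪r, H r⟫ with hc
    clear_value c
    have hr2pos : 0 < ‖r‖ ^ 2 := by
      rcases eq_or_ne r 0 with h | h
      · exfalso
        rw [h] at hc
        simp at hc
        rw [hc] at hcpos
        exact lt_irrefl 0 hcpos
      · exact pow_pos (norm_pos_iff.mpr h) 2
    have hLpos : 0 < L_G := by nlinarith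
    have hval : ‖r‖ ^ 2 / c * ‖r‖ ^ 2 - (‖r‖ ^ 2 / c) ^ 2 / 2 * c = ‖r‖ ^ 4 / (2 * c) := by
      field_simp; ring
    rw [hval, div_le_div_iff₀ (by linarith) (by linarith)]
    nlinarith
  · intro hcond s' hs' hnorm
    rw [key]
    have htri : Δ / 2 ≤ s' * ‖r‖ := by
      have : Δ ≤ ‖v‖ + ‖s' • r‖ := hnorm ▸ norm_add_le v (s' • r)
      rw [norm_smul, Real.norm_eq_abs, abs_of_nonneg hs'] at this
      linarith
    have htri2 : Δ / 2 * ‖r‖ ≤ s' * ‖r‖ * ‖r‖ :=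
      mul_le_mul_of_nonneg_right htri (norm_nonneg r)
    rcases le_or_gt ⟪r, H r⟫ 0 with hcle | hcpos
    · have h4 : 0 ≤ s' ^ 2 * (-⟪r, H r⟫) := by
        apply mul_nonneg (sq_nonneg _)
        linarith
      nlinarith
    · have hbd : Δ ≤ ‖v + (‖r‖ ^ 2 / ⟪r, H r⟫) • r‖ := by
        by_contra h
        push_neg at h
        exact hcond ⟨hcpos, h⟩
      have expand : ∀ s : ℝ, ‖v + s • r‖ ^ 2 = ‖v‖ ^ 2 + 2 * s * ⟪v, r⟫ + s ^ 2 * ‖r‖ ^ 2 := by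
        intro s
        rw [norm_add_sq_real, real_inner_smul_right, norm_smul, Real.norm_eq_abs,
          mul_pow, sq_abs]
        ring
      have hsstar : (0:ℝ) ≤ ‖r‖ ^ 2 / ⟪r, H r⟫ := div_nonneg (sq_nonneg _) hcpos.le
      have e1 : ‖v‖ ^ 2 + 2 * s' * ⟪v, r⟫ + s' ^ 2 * ‖r‖ ^ 2 = Δ ^ 2 := by
        rw [← expand s', hnorm]
      have e2 : Δ ^ 2 ≤ ‖v‖ ^ 2 + 2 * (‖r‖ ^ 2 / ⟪r, H r⟫) * ⟪v, r⟫
          + (‖r‖ ^ 2 / ⟪r, H r⟫) ^ 2 * ‖r‖ ^ 2 := by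
        rw [← expand _]
        exact pow_le_pow_left₀ hΔ.le hbd 2
      have e0 : ‖v‖ ^ 2 ≤ (Δ / 2) ^ 2 := pow_le_pow_left₀ (norm_nonneg v) hv 2
      have hle : s' ≤ ‖r‖ ^ 2 / ⟪r, H r⟫ :=
        boundary_step_aux Δ ‖v‖ ‖r‖ ⟪v, r⟫ s' _ hΔ hs' hsstar e0 e1 e2
      have hsc : s' ^ 2 * ⟪r, H r⟫ ≤ s' * ‖r‖ ^ 2 := by
        have h5 : s' * ⟪r, H r⟫ ≤ ‖r‖ ^ 2 := (le_div_iff₀ hcpos).mp hle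
        nlinarith [mul_le_mul_of_nonneg_left h5 hs']
      nlinarith
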